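/- Let T be a hyperbolic cylinder with core geodesic of length l, and let V ⊆ T be an essential annulus whose two boundary components are graphs over the core geodesic, given by piecewise smooth functions r₁ > r₂ : [0,l] → ℝ in Fermi coordinates. Then L(∂V)² − |V|² ≥ 4l², with equality if and only if r₁ and r₂ are constant with r₁ = −r₂. -/

import Mathlib

/- STATEMENT 6: Let T be a hyperbolic cylinder with core geodesic of length l and
V ⊆ T an essential annulus whose two boundary components are graphs over the
core geodesic, given by piecewise smooth functions r₁ > r₂ : [0,l] → ℝ in Fermi
coordinates.  Then L(∂V)² − |V|² ≥ 4l², with equality iff r₁ and r₂ are constant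
with r₁ = −r₂.

In Fermi coordinates the metric is dr² + cosh²(r)ds², so
|V| = ∫₀ˡ (sinh r₁ − sinh r₂) ds and
L(∂V) = Σᵢ ∫₀ˡ √(ṙᵢ² + 1) cosh(rᵢ) ds. -/

noncomputable section
open Real intervalIntegral
open MeasureTheory

-- Minkowski-type inequality
lemma mink (l : ℝ) (hl : 0 ≤ l) (f : ℝ → ℝ) (hf : Continuous f) :
    Real.sqrt ((∫ s in (0:ℝ)..l, f s) ^ 2 + l ^ 2) ≤ ∫ s in (0:ℝ)..l, Real.sqrt (f s ^ 2 + 1) := by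
  have hF : Continuous (fun s => (f s : ℂ) + Complex.I) := by continuity
  have h1 : (∫ s in (0:ℝ)..l, ((f s : ℂ) + Complex.I))
      = ((∫ s in (0:ℝ)..l, f s : ℝ) : ℂ) + l • Complex.I := by
    rw [intervalIntegral.integral_add (by exact ((Complex.continuous_ofReal.comp hf).intervalIntegrable 0 l))
      (intervalIntegrable_const), intervalIntegral.integral_ofReal,
      intervalIntegral.integral_const, sub_zero]
  have h2 : ‖∫ s in (0:ℝ)..l, ((f s : ℂ) + Complex.I)‖
      = Real.sqrt ((∫ s in (0:ℝ)..l, f s) ^ 2 + l ^ 2) := by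
    rw [h1]
    rw [Complex.norm_def]
    congr 1
    have : ((∫ s in (0:ℝ)..l, f s : ℝ) : ℂ) + l • Complex.I
        = Complex.mk (∫ s in (0:ℝ)..l, f s) l := by
      apply Complex.ext <;> simp
    rw [this, Complex.normSq_mk] ; ring
  calc Real.sqrt ((∫ s in (0:ℝ)..l, f s) ^ 2 + l ^ 2)
      = ‖∫ s in (0:ℝ)..l, ((f s : ℂ) + Complex.I)‖ := h2.symm
    _ ≤ ∫ s in (0:ℝ)..l, ‖(f s : ℂ) + Complex.I‖ :=
        intervalIntegral.norm_integral_le_integral_norm hl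
    _ = ∫ s in (0:ℝ)..l, Real.sqrt (f s ^ 2 + 1) := by
        apply intervalIntegral.integral_congr
        intro s _
        show ‖(f s : ℂ) + Complex.I‖ = _
        rw [Complex.norm_def]
        congr 1
        have : (f s : ℂ) + Complex.I = Complex.mk (f s) 1 := by
          apply Complex.ext <;> simp
        rw [this, Complex.normSq_mk] ; ring

-- pointwise: 1 ≤ sqrt(d^2+1)
lemma one_le_sq (d : ℝ) : 1 ≤ Real.sqrt (d ^ 2 + 1) := by
  nlinarith [Real.sq_sqrt (show (0:ℝ) ≤ d ^ 2 + 1 by positivity),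
    Real.sqrt_nonneg (d ^ 2 + 1), sq_nonneg (Real.sqrt (d ^ 2 + 1) - 1), sq_nonneg d]

lemma cosh_le_int (l : ℝ) (hl : 0 ≤ l) (r : ℝ → ℝ) (h : ContDiff ℝ 1 r) :
    (∫ s in (0:ℝ)..l, Real.cosh (r s))
      ≤ ∫ s in (0:ℝ)..l, Real.sqrt ((deriv r s) ^ 2 + 1) * Real.cosh (r s) := by
  have hd : Continuous (deriv r) := h.continuous_deriv le_rfl
  have hc : Continuous fun s => Real.cosh (r s) := Real.continuous_cosh.comp h.continuous
  apply intervalIntegral.integral_mono_on hl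
  · exact (hc.intervalIntegrable 0 l)
  · exact (((Real.continuous_sqrt.comp (by continuity)).mul hc).intervalIntegrable 0 l)
  · intro s _
    nlinarith [one_le_sq (deriv r s), (Real.cosh_pos (r s)).le,
      mul_le_mul_of_nonneg_right (one_le_sq (deriv r s)) (Real.cosh_pos (r s)).le]

lemma eq_const_of_eq (l : ℝ) (hl : 0 < l) (r : ℝ → ℝ) (h : ContDiff ℝ 1 r)
    (heq : (∫ s in (0:ℝ)..l, Real.sqrt ((deriv r s) ^ 2 + 1) * Real.cosh (r s))
         = ∫ s in (0:ℝ)..l, Real.cosh (r s)) :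
    ∀ s ∈ Set.Icc (0:ℝ) l, r s = r 0 := by
  have hd : Continuous (deriv r) := h.continuous_deriv le_rfl
  set g : ℝ → ℝ := fun s => (Real.sqrt ((deriv r s) ^ 2 + 1) - 1) * Real.cosh (r s) with hg
  have hgc : Continuous g := by
    apply Continuous.mul
    · exact (Real.continuous_sqrt.comp (by continuity)).sub continuous_const
    · exact Real.continuous_cosh.comp h.continuous
  have hgnn : ∀ s, 0 ≤ g s := fun s =>
    mul_nonneg (by linarith [one_le_sq (deriv r s)]) (Real.cosh_pos (r s)).le
  have hi1 : IntervalIntegrable (fun s => Real.sqrt ((deriv r s) ^ 2 + 1) * Real.cosh (r s))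
      MeasureTheory.volume 0 l :=
    Continuous.intervalIntegrable
      ((Real.continuous_sqrt.comp ((hd.pow 2).add continuous_const)).mul
        (Real.continuous_cosh.comp h.continuous)) 0 l
  have hi2 : IntervalIntegrable (fun s => Real.cosh (r s)) MeasureTheory.volume 0 l :=
    (Real.continuous_cosh.comp h.continuous).intervalIntegrable 0 l
  have hgint : (∫ s in (0:ℝ)..l, g s) = 0 := by
    have : (∫ s in (0:ℝ)..l, g s)
        = (∫ s in (0:ℝ)..l, Real.sqrt ((deriv r s) ^ 2 + 1) * Real.cosh (r s))
          - ∫ s in (0:ℝ)..l, Real.cosh (r s) := by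
      rw [← intervalIntegral.integral_sub hi1 hi2]
      apply intervalIntegral.integral_congr
      intro s _; simp only [hg]; ring
    rw [this, heq, sub_self]
  have hae : g =ᵐ[MeasureTheory.volume.restrict (Set.Ioc (0:ℝ) l)] 0 := by
    rw [← intervalIntegral.integral_eq_zero_iff_of_le_of_nonneg_ae hl.le
      (Filter.Eventually.of_forall (fun s => hgnn s)) (hgc.intervalIntegrable 0 l)]
    exact hgint
  have hae' : ∀ᵐ x ∂(MeasureTheory.volume : MeasureTheory.Measure ℝ),
      x ∈ Set.Ioc (0:ℝ) l → deriv r x = 0 := by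
    have := (MeasureTheory.ae_restrict_iff' measurableSet_Ioc).mp hae
    filter_upwards [this] with x hx hxm
    have hgx : g x = 0 := hx hxm
    have h1 : Real.sqrt ((deriv r x) ^ 2 + 1) = 1 := by
      have := (Real.cosh_pos (r x)).ne'
      have : Real.sqrt ((deriv r x) ^ 2 + 1) - 1 = 0 := by
        rcases mul_eq_zero.mp hgx with h | h
        · exact h
        · exact absurd h this
      linarith
    have h2 : (deriv r x) ^ 2 + 1 = 1 := by
      have := Real.sq_sqrt (by positivity : (0:ℝ) ≤ (deriv r x) ^ 2 + 1)
      rw [h1] at this; nlinarith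
    nlinarith [sq_nonneg (deriv r x)]
  intro s hs
  have hfund : r s - r 0 = ∫ x in (0:ℝ)..s, deriv r x := by
    rw [intervalIntegral.integral_deriv_eq_sub (fun x _ => h.differentiable one_ne_zero x)
      (hd.intervalIntegrable 0 s)]
  have hzero : (∫ x in (0:ℝ)..s, deriv r x) = 0 := by
    have : (∫ x in (0:ℝ)..s, deriv r x) = ∫ x in (0:ℝ)..s, (0:ℝ) := by
      apply intervalIntegral.integral_congr_ae
      filter_upwards [hae'] with x hx hxm
      rw [Set.uIoc_of_le hs.1] at hxm
      exact hx ⟨hxm.1, hxm.2.trans hs.2⟩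
    simp [this]
  linarith [hfund, hzero]

lemma const_int (l c : ℝ) (hl : 0 < l) (r : ℝ → ℝ)
    (hc : ∀ s ∈ Set.Icc (0:ℝ) l, r s = c) :
    (∫ s in (0:ℝ)..l, Real.sqrt ((deriv r s) ^ 2 + 1) * Real.cosh (r s)) = l * Real.cosh c := by
  have h0 : ∀ᵐ x : ℝ ∂MeasureTheory.volume, x ≠ l := by
    refine MeasureTheory.ae_iff.mpr ?_
    simpa using MeasureTheory.measure_singleton (μ := MeasureTheory.volume) l
  have hcongr : (∫ s in (0:ℝ)..l, Real.sqrt ((deriv r s) ^ 2 + 1) * Real.cosh (r s))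
      = ∫ s in (0:ℝ)..l, Real.cosh c := by
    apply intervalIntegral.integral_congr_ae
    filter_upwards [h0] with x hxl hxm
    rw [Set.uIoc_of_le hl.le] at hxm
    have hxo : x ∈ Set.Ioo (0:ℝ) l := ⟨hxm.1, lt_of_le_of_ne hxm.2 hxl⟩
    have hdx : deriv r x = 0 := by
      have hev : r =ᶠ[nhds x] (fun _ => c) := by
        filter_upwards [Ioo_mem_nhds hxo.1 hxo.2] with y hy
        exact hc y ⟨hy.1.le, hy.2.le⟩
      rw [hev.deriv_eq, deriv_const]
    have hrx : r x = c := hc x ⟨hxo.1.le, hxo.2.le⟩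
    rw [hdx, hrx]
    norm_num
  rw [hcongr, intervalIntegral.integral_const, smul_eq_mul, sub_zero]

lemma sqrt_sinh_sq (x : ℝ) : Real.sqrt (Real.sinh x ^ 2 + 1) = Real.cosh x := by
  rw [← Real.cosh_sq]
  exact Real.sqrt_sq (Real.cosh_pos x).le

lemma alg_BB (l a1 a2 t : ℝ) (ht : 0 ≤ t) (h : t ^ 2 = (a1 ^ 2 + l ^ 2) * (a2 ^ 2 + l ^ 2)) :
    l ^ 2 - a1 * a2 ≤ t := by
  nlinarith [sq_nonneg (l * (a1 + a2)), sq_nonneg (t - (l ^ 2 - a1 * a2)),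
    sq_nonneg (t + (l ^ 2 - a1 * a2))]

lemma alg_e1 (l a1 a2 b1 b2 : ℝ) (h1 : b1 ^ 2 = a1 ^ 2 + l ^ 2) (h2 : b2 ^ 2 = a2 ^ 2 + l ^ 2)
    (hbb : l ^ 2 - a1 * a2 ≤ b1 * b2) :
    (b1 + b2) ^ 2 - (a1 - a2) ^ 2 ≥ 4 * l ^ 2 := by nlinarith

lemma alg_sq_eq (S L : ℝ) (h0 : 0 ≤ S) (h1 : S ≤ L) (h2 : L ^ 2 = S ^ 2) : L = S := by
  nlinarith [sq_nonneg (L - S), mul_nonneg h0 (sub_nonneg.mpr h1)]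

lemma alg_BBeq (l a1 a2 b1 b2 : ℝ) (h1 : b1 ^ 2 = a1 ^ 2 + l ^ 2)
    (h2 : b2 ^ 2 = a2 ^ 2 + l ^ 2)
    (hE : (b1 + b2) ^ 2 - (a1 - a2) ^ 2 = 4 * l ^ 2) :
    b1 * b2 = l ^ 2 - a1 * a2 := by nlinarith

set_option maxHeartbeats 1000000 in

theorem graph_annulus_length_area (l : ℝ) (hl : 0 < l) (r₁ r₂ : ℝ → ℝ)
    (h₁ : ContDiff ℝ 1 r₁) (h₂ : ContDiff ℝ 1 r₂)
    (hper₁ : r₁ 0 = r₁ l) (hper₂ : r₂ 0 = r₂ l)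
    (hord : ∀ s ∈ Set.Icc (0:ℝ) l, r₂ s < r₁ s)
    (A L : ℝ)
    (hA : A = ∫ s in (0:ℝ)..l, (Real.sinh (r₁ s) - Real.sinh (r₂ s)))
    (hL : L = (∫ s in (0:ℝ)..l, Real.sqrt ((deriv r₁ s) ^ 2 + 1) * Real.cosh (r₁ s))
            + (∫ s in (0:ℝ)..l, Real.sqrt ((deriv r₂ s) ^ 2 + 1) * Real.cosh (r₂ s))) :
    L ^ 2 - A ^ 2 ≥ 4 * l ^ 2 ∧
      (L ^ 2 - A ^ 2 = 4 * l ^ 2 ↔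
        ∃ c : ℝ, ∀ s ∈ Set.Icc (0:ℝ) l, r₁ s = c ∧ r₂ s = -c) := by
  obtain ⟨A₁, hA₁⟩ : ∃ x : ℝ, (∫ s in (0:ℝ)..l, Real.sinh (r₁ s)) = x := ⟨_, rfl⟩
  obtain ⟨A₂, hA₂⟩ : ∃ x : ℝ, (∫ s in (0:ℝ)..l, Real.sinh (r₂ s)) = x := ⟨_, rfl⟩
  obtain ⟨I₁, hI₁⟩ : ∃ x : ℝ,
    (∫ s in (0:ℝ)..l, Real.sqrt ((deriv r₁ s) ^ 2 + 1) * Real.cosh (r₁ s)) = x := ⟨_, rfl⟩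
  obtain ⟨I₂, hI₂⟩ : ∃ x : ℝ,
    (∫ s in (0:ℝ)..l, Real.sqrt ((deriv r₂ s) ^ 2 + 1) * Real.cosh (r₂ s)) = x := ⟨_, rfl⟩
  obtain ⟨C₁, hCd₁⟩ : ∃ x : ℝ, (∫ s in (0:ℝ)..l, Real.cosh (r₁ s)) = x := ⟨_, rfl⟩
  obtain ⟨C₂, hCd₂⟩ : ∃ x : ℝ, (∫ s in (0:ℝ)..l, Real.cosh (r₂ s)) = x := ⟨_, rfl⟩
  obtain ⟨B₁, hB₁⟩ : ∃ x : ℝ, Real.sqrt (A₁ ^ 2 + l ^ 2) = x := ⟨_, rfl⟩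
  obtain ⟨B₂, hB₂⟩ : ∃ x : ℝ, Real.sqrt (A₂ ^ 2 + l ^ 2) = x := ⟨_, rfl⟩
  have hsi₁ : IntervalIntegrable (fun s => Real.sinh (r₁ s)) MeasureTheory.volume 0 l :=
    Continuous.intervalIntegrable (Real.continuous_sinh.comp h₁.continuous) 0 l
  have hsi₂ : IntervalIntegrable (fun s => Real.sinh (r₂ s)) MeasureTheory.volume 0 l :=
    Continuous.intervalIntegrable (Real.continuous_sinh.comp h₂.continuous) 0 l
  have hAsplit : A = A₁ - A₂ := by
    rw [hA, intervalIntegral.integral_sub hsi₁ hsi₂, hA₁, hA₂]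
  have hLsplit : L = I₁ + I₂ := by rw [hL, hI₁, hI₂]
  have hC₁ : C₁ ≤ I₁ := by rw [← hCd₁, ← hI₁]; exact cosh_le_int l hl.le r₁ h₁
  have hC₂ : C₂ ≤ I₂ := by rw [← hCd₂, ← hI₂]; exact cosh_le_int l hl.le r₂ h₂
  have hM₁ : B₁ ≤ C₁ := by
    rw [← hB₁, ← hCd₁, ← hA₁]
    have h := mink l hl.le (fun s => Real.sinh (r₁ s)) (Real.continuous_sinh.comp h₁.continuous)
    calc Real.sqrt ((∫ s in (0:ℝ)..l, Real.sinh (r₁ s)) ^ 2 + l ^ 2)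
        ≤ ∫ s in (0:ℝ)..l, Real.sqrt (Real.sinh (r₁ s) ^ 2 + 1) := h
      _ = ∫ s in (0:ℝ)..l, Real.cosh (r₁ s) :=
          intervalIntegral.integral_congr (fun s _ => sqrt_sinh_sq (r₁ s))
  have hM₂ : B₂ ≤ C₂ := by
    rw [← hB₂, ← hCd₂, ← hA₂]
    have h := mink l hl.le (fun s => Real.sinh (r₂ s)) (Real.continuous_sinh.comp h₂.continuous)
    calc Real.sqrt ((∫ s in (0:ℝ)..l, Real.sinh (r₂ s)) ^ 2 + l ^ 2)
        ≤ ∫ s in (0:ℝ)..l, Real.sqrt (Real.sinh (r₂ s) ^ 2 + 1) := h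
      _ = ∫ s in (0:ℝ)..l, Real.cosh (r₂ s) :=
          intervalIntegral.integral_congr (fun s _ => sqrt_sinh_sq (r₂ s))
  have hB₁I : B₁ ≤ I₁ := hM₁.trans hC₁
  have hB₂I : B₂ ≤ I₂ := hM₂.trans hC₂
  have hB₁nn : 0 ≤ B₁ := hB₁ ▸ Real.sqrt_nonneg _
  have hB₂nn : 0 ≤ B₂ := hB₂ ▸ Real.sqrt_nonneg _
  have hB₁sq : B₁ ^ 2 = A₁ ^ 2 + l ^ 2 := by rw [← hB₁]; exact Real.sq_sqrt (by positivity)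
  have hB₂sq : B₂ ^ 2 = A₂ ^ 2 + l ^ 2 := by rw [← hB₂]; exact Real.sq_sqrt (by positivity)
  have hBBsq : (B₁ * B₂) ^ 2 = (A₁ ^ 2 + l ^ 2) * (A₂ ^ 2 + l ^ 2) := by
    rw [mul_pow, hB₁sq, hB₂sq]
  have hBB : l ^ 2 - A₁ * A₂ ≤ B₁ * B₂ :=
    alg_BB l A₁ A₂ _ (mul_nonneg hB₁nn hB₂nn) hBBsq
  have hSnn : 0 ≤ B₁ + B₂ := by linarith
  have hLB : B₁ + B₂ ≤ L := by rw [hLsplit]; linarith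
  have hLBsq : (B₁ + B₂) ^ 2 ≤ L ^ 2 := pow_le_pow_left₀ hSnn hLB 2
  have e1 : (B₁ + B₂) ^ 2 - (A₁ - A₂) ^ 2 ≥ 4 * l ^ 2 := alg_e1 l A₁ A₂ B₁ B₂ hB₁sq hB₂sq hBB
  have hmain : L ^ 2 - A ^ 2 ≥ 4 * l ^ 2 := by rw [hAsplit]; linarith [hLBsq, e1]
  refine ⟨hmain, ?_, ?_⟩
  · -- equality → constants
    intro hE
    rw [hAsplit] at hE
    have hLsqB : L ^ 2 = (B₁ + B₂) ^ 2 := le_antisymm (by linarith) hLBsq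
    have hLeq : L = B₁ + B₂ := alg_sq_eq _ _ hSnn hLB hLsqB
    have hI₁eq : I₁ = B₁ := by rw [hLsplit] at hLeq; linarith
    have hI₂eq : I₂ = B₂ := by rw [hLsplit] at hLeq; linarith
    have hc₁ : ∀ s ∈ Set.Icc (0:ℝ) l, r₁ s = r₁ 0 := by
      apply eq_const_of_eq l hl r₁ h₁
      rw [hI₁, hCd₁]; linarith
    have hc₂ : ∀ s ∈ Set.Icc (0:ℝ) l, r₂ s = r₂ 0 := by
      apply eq_const_of_eq l hl r₂ h₂
      rw [hI₂, hCd₂]; linarith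
    have hA₁v : A₁ = l * Real.sinh (r₁ 0) := by
      rw [← hA₁]
      rw [show (∫ s in (0:ℝ)..l, Real.sinh (r₁ s)) = ∫ s in (0:ℝ)..l, Real.sinh (r₁ 0) from
        intervalIntegral.integral_congr (fun s hs => by
          rw [Set.uIcc_of_le hl.le] at hs; rw [hc₁ s hs])]
      rw [intervalIntegral.integral_const, smul_eq_mul, sub_zero]
    have hA₂v : A₂ = l * Real.sinh (r₂ 0) := by
      rw [← hA₂]
      rw [show (∫ s in (0:ℝ)..l, Real.sinh (r₂ s)) = ∫ s in (0:ℝ)..l, Real.sinh (r₂ 0) from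
        intervalIntegral.integral_congr (fun s hs => by
          rw [Set.uIcc_of_le hl.le] at hs; rw [hc₂ s hs])]
      rw [intervalIntegral.integral_const, smul_eq_mul, sub_zero]
    have hBBeq : B₁ * B₂ = l ^ 2 - A₁ * A₂ := by
      rw [hLeq] at hE; exact alg_BBeq l A₁ A₂ B₁ B₂ hB₁sq hB₂sq hE
    have hprodeq : (l ^ 2 - A₁ * A₂) ^ 2 = (A₁ ^ 2 + l ^ 2) * (A₂ ^ 2 + l ^ 2) := by
      rw [← hBBeq]; exact hBBsq
    have h0 : l ^ 2 * (A₁ + A₂) ^ 2 = 0 := by linear_combination -hprodeq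
    have hsum0 : A₁ + A₂ = 0 := by
      have h' := (mul_eq_zero.mp h0).resolve_left (by positivity)
      exact pow_eq_zero_iff (n := 2) (by norm_num) |>.mp h'
    have hx : l * (Real.sinh (r₁ 0) + Real.sinh (r₂ 0)) = 0 := by
      rw [hA₁v, hA₂v] at hsum0; linarith
    have hy := (mul_eq_zero.mp hx).resolve_left hl.ne'
    have hcc : r₂ 0 = -(r₁ 0) := by
      apply Real.sinh_injective
      rw [Real.sinh_neg]; linarith
    exact ⟨r₁ 0, fun s hs => ⟨hc₁ s hs, by rw [hc₂ s hs, hcc]⟩⟩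
  · -- constants → equality
    rintro ⟨c, hc⟩
    have hI₁v : I₁ = l * Real.cosh c := by
      rw [← hI₁]; exact const_int l c hl r₁ (fun s hs => (hc s hs).1)
    have hI₂v : I₂ = l * Real.cosh (-c) := by
      rw [← hI₂]; exact const_int l (-c) hl r₂ (fun s hs => (hc s hs).2)
    have hAv : A = l * (Real.sinh c - Real.sinh (-c)) := by
      rw [hA]
      rw [show (∫ s in (0:ℝ)..l, (Real.sinh (r₁ s) - Real.sinh (r₂ s)))
          = ∫ s in (0:ℝ)..l, (Real.sinh c - Real.sinh (-c)) from
        intervalIntegral.integral_congr (fun s hs => by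
          rw [Set.uIcc_of_le hl.le] at hs
          rw [(hc s hs).1, (hc s hs).2])]
      rw [intervalIntegral.integral_const, smul_eq_mul, sub_zero]
    rw [hLsplit, hI₁v, hI₂v, hAv, Real.cosh_neg, Real.sinh_neg]
    have h := Real.cosh_sq_sub_sinh_sq c
    linear_combination 4 * l ^ 2 * h
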